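/- Let V > g > 0, N ≥ 2 and suppose all N agents play the symmetric mixed strategy (p*, F*) with p* = (r1*g/(V-g+r1*g))^(1/(N-1)), r1 ∈ (0,1], r2 ∈ [0,1]. Then for any bid b ∈ [0, V-g], the expected payoff of a single agent bidding b against N-1 independent opponents playing (p*, F*) equals zero: G(b)^(N-1)*(V - g - b) - (1 - G(b)^(N-1))*(r1*g + r2*b) = 0, where G(b) = p* + (1-p*)*F*(b); and for any b > V - g, the expected payoff is strictly negative. Hence (p*, F*) is a symmetric Nash equilibrium with zero expected payoff. -/

import Mathlib

/-- Verification of the symmetric mixed equilibrium `(p*, F*)`: letting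
`G(b) = p* + (1-p*)F*(b)` (with `F* = 1` above `V-g`), the expected payoff of a bid
`b ∈ [0, V-g]` against `N-1` independent opponents playing `(p*, F*)` is zero,
`G(b)^(N-1)*(V-g-b) - (1 - G(b)^(N-1))*(r1*g + r2*b) = 0`, and any bid `b > V-g`
yields a strictly negative expected payoff.  Hence `(p*, F*)` is a symmetric Nash
equilibrium with zero expected payoff. -/
theorem stmt18 (V g r1 r2 : ℝ) (N : ℕ) (hN : 2 ≤ N)
    (hg : 0 < g) (hVg : g < V) (hr1 : 0 < r1) (hr1' : r1 ≤ 1) (hr2 : 0 ≤ r2) (hr2' : r2 ≤ 1)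
    (p : ℝ) (hp : p = (r1 * g / (V - g + r1 * g)) ^ (1 / ((N : ℝ) - 1)))
    (F : ℝ → ℝ)
    (hF : ∀ b, F b =
      if b ≤ V - g then
        (((r1 * g + r2 * b) / (V - g - b + r1 * g + r2 * b)) ^ (1 / ((N : ℝ) - 1)) - p)
          / (1 - p)
      else 1)
    (G : ℝ → ℝ) (hG : ∀ b, G b = p + (1 - p) * F b) :
    (∀ b ∈ Set.Icc (0:ℝ) (V - g),
        (G b) ^ (N - 1) * (V - g - b)
          - (1 - (G b) ^ (N - 1)) * (r1 * g + r2 * b) = 0) ∧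
      ∀ b : ℝ, V - g < b →
        (G b) ^ (N - 1) * (V - g - b)
          - (1 - (G b) ^ (N - 1)) * (r1 * g + r2 * b) < 0 := by
  have hNR : (2:ℝ) ≤ (N:ℝ) := by exact_mod_cast hN
  have hN1 : (0:ℝ) < (N:ℝ) - 1 := by linarith
  have hcast : ((N - 1 : ℕ) : ℝ) = (N:ℝ) - 1 := by
    have : 1 ≤ N := by omega
    push_cast [Nat.cast_sub this]; ring
  have he : (0:ℝ) < 1 / ((N:ℝ) - 1) := by positivity
  have hVg0 : (0:ℝ) < V - g := by linarith
  have hrg : 0 < r1 * g := by positivity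
  -- p < 1
  have hplt : p < 1 := by
    rw [hp]
    apply Real.rpow_lt_one (by positivity)
    · rw [div_lt_one (by linarith)]; linarith
    · exact he
  have hp1 : (1:ℝ) - p ≠ 0 := by linarith
  constructor
  · rintro b ⟨hb0, hb1⟩
    set A := r1 * g + r2 * b with hA
    set B := V - g - b with hB
    have hApos : 0 < A := by have : 0 ≤ r2 * b := by positivity
                             simp [hA]; nlinarith
    have hBnn : 0 ≤ B := by simp [hB]; linarith
    have hS : 0 < B + A := by linarith
    have hGb : G b = (A / (B + A)) ^ (1 / ((N:ℝ) - 1)) := by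
      rw [hG, hF, if_pos hb1]
      have : V - g - b + r1 * g + r2 * b = B + A := by rw [hA, hB]; ring
      rw [this]
      field_simp
      rw [← hA]; ring
    have hpow : (G b) ^ (N - 1) = A / (B + A) := by
      rw [hGb, ← Real.rpow_natCast _ (N - 1), ← Real.rpow_mul (by positivity), hcast]
      rw [one_div_mul_cancel (by linarith), Real.rpow_one]
    rw [hpow]
    field_simp
    ring
  · intro b hb
    have hGb : G b = 1 := by
      rw [hG, hF, if_neg (by linarith)]
      ring
    rw [hGb, one_pow]
    simp
    linarith
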